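/- Let m ≥ 2 and let p₁, …, p_m be distinct points in Euclidean space ℝ^d forming only acute angles (for all triples of distinct indices i, j, l the angle ∠p_i p_j p_l is acute). Then for every N ∈ ℕ there exists a finite set V of points in Euclidean space ℝ^{d+m} that contains the complete m-partite graph K_m(N) in its strict double-normal graph, i.e., there are m pairwise disjoint subsets V₁, …, V_m of V, each of cardinality N, such that any two points lying in different subsets form a strict double-normal pair of V. -/

import Mathlib

open scoped RealInnerProductSpace

abbrev Euc (d : ℕ) := EuclideanSpace ℝ (Fin d)

/-- `p, q` form a double-normal pair of the finite point set `V`. -/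
def IsDoubleNormalPair {d : ℕ} (V : Finset (Euc d)) (p q : Euc d) : Prop :=
  p ≠ q ∧ p ∈ V ∧ q ∈ V ∧
    ∀ x ∈ V, 0 ≤ ⟪x - p, q - p⟫ ∧ 0 ≤ ⟪x - q, p - q⟫

/-- `p, q` form a strict double-normal pair of the finite point set `V`. -/
def IsStrictDoubleNormalPair {d : ℕ} (V : Finset (Euc d)) (p q : Euc d) : Prop :=
  p ≠ q ∧ p ∈ V ∧ q ∈ V ∧
    ∀ x ∈ V, x ≠ p → x ≠ q → 0 < ⟪x - p, q - p⟫ ∧ 0 < ⟪x - q, p - q⟫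

/-- Some finite set in `ℝ^d` contains the complete `k`-partite graph `K_k(r)`
in its double-normal graph. -/
def ContainsDNMultipartite (d k r : ℕ) : Prop :=
  ∃ (V : Finset (Euc d)) (P : Fin k → Finset (Euc d)),
    (∀ i, P i ⊆ V) ∧ (∀ i, (P i).card = r) ∧
    (∀ i j, i ≠ j → Disjoint (P i) (P j)) ∧
    (∀ i j, i ≠ j → ∀ p ∈ P i, ∀ q ∈ P j, IsDoubleNormalPair V p q)

/-- Some finite set in `ℝ^d` contains the complete `k`-partite graph `K_k(r)`
in its strict double-normal graph. -/
def ContainsStrictDNMultipartite (d k r : ℕ) : Prop :=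
  ∃ (V : Finset (Euc d)) (P : Fin k → Finset (Euc d)),
    (∀ i, P i ⊆ V) ∧ (∀ i, (P i).card = r) ∧
    (∀ i j, i ≠ j → Disjoint (P i) (P j)) ∧
    (∀ i j, i ≠ j → ∀ p ∈ P i, ∀ q ∈ P j, IsStrictDoubleNormalPair V p q)

variable {d m : ℕ}

def emb (d m : ℕ) (a : Euc d) : EuclideanSpace ℝ (Fin d ⊕ Fin m) :=
  WithLp.toLp 2 (fun t => Sum.elim (fun i => a i) (fun _ => (0:ℝ)) t)

def ee (d m : ℕ) (i : Fin m) : EuclideanSpace ℝ (Fin d ⊕ Fin m) :=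
  WithLp.toLp 2 (fun t => Sum.elim (fun _ => (0:ℝ)) (fun j => if j = i then (1:ℝ) else 0) t)

lemma inner_emb_emb (a b : Euc d) : ⟪emb d m a, emb d m b⟫ = ⟪a, b⟫ := by
  rw [PiLp.inner_apply, PiLp.inner_apply, Fintype.sum_sum_type]
  simp [emb, RCLike.inner_apply]

lemma inner_emb_ee (a : Euc d) (i : Fin m) : ⟪emb d m a, ee d m i⟫ = 0 := by
  rw [PiLp.inner_apply, Fintype.sum_sum_type]
  simp [emb, ee, RCLike.inner_apply]

lemma inner_ee_emb (a : Euc d) (i : Fin m) : ⟪ee d m i, emb d m a⟫ = 0 := by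
  rw [real_inner_comm]; exact inner_emb_ee a i

lemma inner_ee_ee (i j : Fin m) : ⟪ee d m i, ee d m j⟫ = if i = j then (1:ℝ) else 0 := by
  rw [PiLp.inner_apply, Fintype.sum_sum_type]
  simp [ee, RCLike.inner_apply]

lemma inner_pt_pt (x y : Euc d) (i j : Fin m) (a b : ℝ) :
    ⟪emb d m x + a • ee d m i, emb d m y + b • ee d m j⟫
      = ⟪x, y⟫ + a * b * (if i = j then 1 else 0) := by
  rw [inner_add_left, inner_add_right, inner_add_right,
    real_inner_smul_left, real_inner_smul_left, real_inner_smul_right,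
    real_inner_smul_right, inner_emb_emb, inner_emb_ee, inner_ee_emb, inner_ee_ee]
  ring

lemma dn_geom_le (Q δ : ℝ) (hQ : 1 < Q) (hδ : 0 < δ) {a b : ℕ} (hab : a < b) :
    Q * (δ/Q^(b+1)) ≤ δ/Q^(a+1) := by
  have hQ0 : (0:ℝ) < Q := by linarith
  have hp : Q^(a+1) * Q ≤ Q^(b+1) := by
    rw [← pow_succ]
    exact pow_le_pow_right₀ (le_of_lt hQ) (by omega)
  rw [mul_comm, div_mul_eq_mul_div, div_le_div_iff₀ (by positivity) (by positivity)]
  nlinarith [hδ, pow_pos hQ0 (a+1), pow_pos hQ0 (b+1)]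

lemma dn_geom_lt (Q δ : ℝ) (hQ : 1 < Q) (hδ : 0 < δ) {a b : ℕ} (hab : a < b) :
    δ/Q^(b+1) < δ/Q^(a+1) := by
  have hQ0 : (0:ℝ) < Q := by linarith
  apply div_lt_div_of_pos_left hδ (by positivity)
  exact pow_lt_pow_right₀ hQ (by omega)

lemma dn_geom_low (Q δ : ℝ) (hQ : 1 < Q) (hδ : 0 < δ) {a N : ℕ} (ha : a < N) :
    δ ≤ δ/Q^(a+1) * Q^N := by
  have hQ0 : (0:ℝ) < Q := by linarith
  have hp : Q^(a+1) ≤ Q^N := pow_le_pow_right₀ (le_of_lt hQ) (by omega)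
  rw [div_mul_eq_mul_div, le_div_iff₀ (by positivity)]
  nlinarith [hδ]

lemma pt_apply_inr (a : Euc d) (i : Fin m) (cc : ℝ) (t : Fin m) :
    (emb d m a + cc • ee d m i) (Sum.inr t) = cc * (if t = i then 1 else 0) := by
  rw [PiLp.add_apply, PiLp.smul_apply]
  simp [emb, ee]


lemma dn_small (T BB δ QN ck : ℝ) (h1 : 16*T^2*BB*QN*δ ≤ 1) (hδ : 0 < δ)
    (hδ1 : δ ≤ 1) (hQN : 0 < QN) (hck : δ ≤ ck*QN) :
    16*(T^2*BB*δ^3) ≤ ck := by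
  have e1 : (16*T^2*BB*QN*δ)*(δ*δ) ≤ 1*(δ*δ) :=
    mul_le_mul_of_nonneg_right h1 (mul_nonneg hδ.le hδ.le)
  have e2 : δ*δ ≤ δ := by nlinarith
  nlinarith

lemma dn_Rbounds (T BB cr ck δ Wij Wii : ℝ) (hT : 0 ≤ T) (hWij : |Wij| ≤ BB)
    (hWii0 : 0 ≤ Wii) (hWii1 : Wii ≤ BB) (hcr : 0 ≤ cr) (hck : 0 ≤ ck)
    (hcrδ : cr ≤ δ) (hckδ : ck ≤ δ) :
    -(2*T*δ^2*BB) ≤ T*cr^2*Wij - T*ck^2*Wii ∧ T*cr^2*Wij - T*ck^2*Wii ≤ 2*T*δ^2*BB := by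
  obtain ⟨hW1, hW2⟩ := abs_le.mp hWij
  have hBB : 0 ≤ BB := le_trans (abs_nonneg _) hWij
  have hcr2 : cr^2 ≤ δ^2 := by nlinarith
  have hck2 : ck^2 ≤ δ^2 := by nlinarith
  constructor
  · nlinarith [mul_le_mul_of_nonneg_left hW1 (mul_nonneg hT (sq_nonneg cr)),
      mul_le_mul_of_nonneg_left hWii1 (mul_nonneg hT (sq_nonneg ck)),
      mul_le_mul_of_nonneg_right (mul_le_mul_of_nonneg_left hcr2 hT) hBB,
      mul_le_mul_of_nonneg_right (mul_le_mul_of_nonneg_left hck2 hT) hBB,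
      mul_nonneg (mul_nonneg hT (sq_nonneg δ)) hBB]
  · nlinarith [mul_le_mul_of_nonneg_left hW2 (mul_nonneg hT (sq_nonneg cr)),
      mul_le_mul_of_nonneg_left hWii0 (mul_nonneg hT (sq_nonneg ck)),
      mul_le_mul_of_nonneg_right (mul_le_mul_of_nonneg_left hcr2 hT) hBB,
      mul_nonneg (mul_nonneg hT (sq_nonneg δ)) hBB]

lemma dn_TRbounds (T BB δ R cs ck : ℝ) (hT : 0 < T) (hδ : 0 < δ) (hBB : 0 ≤ BB)
    (hRl : -(2*T*δ^2*BB) ≤ R) (hRu : R ≤ 2*T*δ^2*BB)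
    (hsmall : 16*(T^2*BB*δ^3) ≤ ck)
    (hcs0 : 0 < cs) (hcsδ : cs ≤ δ) (hck0 : 0 < ck) (hckδ : ck ≤ δ) :
    -(ck/4) ≤ T*(cs+ck)*R ∧ T*(cs+ck)*R ≤ ck/4 := by
  have hTs : 0 ≤ T*(cs+ck) := by positivity
  have hTs2 : T*(cs+ck) ≤ 2*T*δ := by nlinarith
  have h4 : (2*T*δ)*(2*T*δ^2*BB) ≤ ck/4 := by nlinarith
  constructor
  · nlinarith [mul_le_mul_of_nonneg_left hRl hTs,
      mul_le_mul_of_nonneg_right hTs2 (by positivity : (0:ℝ) ≤ 2*T*δ^2*BB)]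
  · nlinarith [mul_le_mul_of_nonneg_left hRu hTs,
      mul_le_mul_of_nonneg_right hTs2 (by positivity : (0:ℝ) ≤ 2*T*δ^2*BB)]

lemma dn_hard (T Q g G γ R cs ck : ℝ)
    (hT : 0 < T) (hg : 0 < g)
    (hTQg : T*((1+Q)*g) = 2) (hQg : 4*G ≤ Q*g) (hQ0 : 0 < Q)
    (hγl : g ≤ γ) (hγu : γ ≤ G)
    (hcs0 : 0 < cs) (hck0 : 0 < ck)
    (hTRl : -(ck/4) ≤ T*(cs+ck)*R) (hTRu : T*(cs+ck)*R ≤ ck/4)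
    (hor : Q*ck ≤ cs ∨ Q*cs ≤ ck) :
    0 < (T*cs^2 - T*ck^2)*(γ + R) - cs*ck + ck*ck := by
  have hγ0 : 0 < γ := lt_of_lt_of_le hg hγl
  rcases hor with h1 | h1
  · have h2 : ck < cs := by nlinarith
    have e2 : (1+Q)*ck ≤ cs + ck := by nlinarith
    have e3 : ((1+Q)*ck)*g ≤ (cs+ck)*γ :=
      mul_le_mul e2 hγl hg.le (by linarith)
    have e5 : T*(((1+Q)*ck)*g) ≤ T*((cs+ck)*γ) :=
      mul_le_mul_of_nonneg_left e3 hT.le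
    have e4 : T*(((1+Q)*ck)*g) = 2*ck := by linear_combination ck * hTQg
    have hbr1 : 2*ck ≤ T*(cs+ck)*γ := by nlinarith [e5, e4]
    have hfin : 0 < (cs - ck) * (T*(cs+ck)*(γ + R) - ck) := by
      apply mul_pos (by linarith)
      nlinarith
    nlinarith
  · have h2 : cs < ck := by nlinarith
    have e2 : Q*(cs+ck) ≤ (1+Q)*ck := by nlinarith
    have m1 : 0 ≤ T*γ*g := by positivity
    have e5 : (T*γ*g)*(Q*(cs+ck)) ≤ (T*γ*g)*((1+Q)*ck) :=
      mul_le_mul_of_nonneg_left e2 m1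
    have e6 : 2*γ*ck ≤ 2*G*ck := by nlinarith
    have e7 : 4*G*ck ≤ (Q*g)*ck := by nlinarith
    have e8 : T*γ*g*((1+Q)*ck) = 2*γ*ck := by linear_combination (γ*ck) * hTQg
    have hX : T*(cs+ck)*γ ≤ ck/2 := by
      nlinarith [e5, e6, e7, e8, mul_pos hQ0 hg]
    have hfin : 0 < (ck - cs) * (ck - T*(cs+ck)*(γ + R)) := by
      apply mul_pos (by linarith)
      nlinarith
    nlinarith

lemma dn_norm_bound {d : ℕ} (x y : Euc d) (T a b δ B : ℝ) (hT : 0 ≤ T)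
    (ha0 : 0 ≤ a) (hb0 : 0 ≤ b) (haδ : a ≤ δ) (hbδ : b ≤ δ)
    (hx : ‖x‖ ≤ B) (hy : ‖y‖ ≤ B) (hB : 0 ≤ B) :
    ‖(T*a^2) • x - (T*b^2) • y‖ ≤ 2*T*B*δ^2 := by
  refine le_trans (norm_sub_le _ _) ?_
  rw [norm_smul, norm_smul]
  simp only [Real.norm_eq_abs]
  rw [abs_of_nonneg (by positivity : (0:ℝ) ≤ T*a^2),
      abs_of_nonneg (by positivity : (0:ℝ) ≤ T*b^2)]
  have h1 : T*a^2*‖x‖ ≤ T*δ^2*B := by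
    have ha2 : a^2 ≤ δ^2 := by nlinarith
    nlinarith [norm_nonneg x, mul_le_mul_of_nonneg_left hx (by positivity : (0:ℝ) ≤ T*a^2),
      mul_le_mul_of_nonneg_right (mul_le_mul_of_nonneg_left ha2 hT) hB]
  have h2 : T*b^2*‖y‖ ≤ T*δ^2*B := by
    have hb2 : b^2 ≤ δ^2 := by nlinarith
    nlinarith [norm_nonneg y, mul_le_mul_of_nonneg_left hy (by positivity : (0:ℝ) ≤ T*b^2),
      mul_le_mul_of_nonneg_right (mul_le_mul_of_nonneg_left hb2 hT) hB]
  nlinarith [h1, h2]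

lemma dn_easy (P0 B T δ base tXV tUY tUV add : ℝ)
    (hbase : P0 ≤ base)
    (hB1 : 1 ≤ B) (hT : 0 < T) (hδ : 0 < δ) (hδ1 : δ ≤ 1)
    (hδA2 : δ*(1+4*T*B^2+4*T^2*B^2) ≤ P0)
    (h1 : |tXV| ≤ B*(2*T*B*δ^2)) (h2 : |tUY| ≤ B*(2*T*B*δ^2))
    (h3 : |tUV| ≤ (2*T*B*δ^2)^2) (hadd : 0 ≤ add) :
    0 < base + tXV + tUY + tUV + add := by
  obtain ⟨h1a, h1b⟩ := abs_le.mp h1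
  obtain ⟨h2a, h2b⟩ := abs_le.mp h2
  obtain ⟨h3a, h3b⟩ := abs_le.mp h3
  have hd2 : δ^2 ≤ δ := by nlinarith
  have hd4 : δ^4 ≤ δ := by nlinarith [sq_nonneg δ, sq_nonneg (δ - 1)]
  have e1 : B*(2*T*B*δ^2) ≤ 2*T*B^2*δ := by nlinarith
  have e2 : (2*T*B*δ^2)^2 ≤ 4*T^2*B^2*δ := by nlinarith [sq_nonneg (T*B)]
  nlinarith

set_option maxHeartbeats 2000000 in
lemma exists_good_family (d m : ℕ) (hm : 2 ≤ m) (p : Fin m → Euc d)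
    (hinj : Function.Injective p)
    (hacute : ∀ i j l : Fin m, i ≠ j → j ≠ l → i ≠ l → 0 < ⟪p i - p j, p l - p j⟫)
    (N : ℕ) :
    ∃ v : Fin m → Fin N → EuclideanSpace ℝ (Fin d ⊕ Fin m),
      (∀ i k j r, v i k = v j r → i = j ∧ k = r) ∧
      (∀ i j k r l s, i ≠ j → (l = i → s ≠ k) →
        0 < ⟪v l s - v i k, v j r - v i k⟫) := by
  have hm0 : 0 < m := by omega
  have hm1 : 1 < m := by omega
  have : Nonempty (Fin m) := ⟨⟨0, hm0⟩⟩
  set i0 : Fin m := ⟨0, hm0⟩ with hi0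
  set j0 : Fin m := ⟨1, hm1⟩ with hj0
  have hij0 : i0 ≠ j0 := by simp [hi0, hj0, Fin.ext_iff]
  -- central vectors
  set w : Fin m → Euc d := fun i => ∑ l, (p l - p i) with hw
  have hpne : ∀ {i j : Fin m}, i ≠ j → p i - p j ≠ 0 := by
    intro i j hij
    exact sub_ne_zero.mpr (fun h => hij (hinj h))
  have hγpos : ∀ i j : Fin m, i ≠ j → 0 < ⟪w i, p j - p i⟫ := by
    intro i j hij
    have hexp : ⟪w i, p j - p i⟫ = ∑ l, ⟪p l - p i, p j - p i⟫ := by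
      rw [hw]; exact sum_inner _ _ _
    rw [hexp]
    apply Finset.sum_pos'
    · intro l _
      rcases eq_or_ne l i with rfl | hli
      · simp
      rcases eq_or_ne l j with rfl | hlj
      · rw [real_inner_self_eq_norm_sq]
        positivity
      · exact le_of_lt (hacute l i j hli hij hlj)
    · refine ⟨j, Finset.mem_univ j, ?_⟩
      have hne : p j - p i ≠ 0 := hpne (Ne.symm hij)
      rw [real_inner_self_eq_norm_sq]
      have : ‖p j - p i‖ ≠ 0 := norm_ne_zero_iff.mpr hne
      positivity
  -- min/max of γ over offdiagonal pairs
  set PS : Finset (Fin m × Fin m) :=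
    Finset.univ.filter (fun z : Fin m × Fin m => z.1 ≠ z.2) with hPS
  have hPSne : PS.Nonempty := ⟨(i0, j0), by simp [hPS, hij0]⟩
  set g : ℝ := PS.inf' hPSne (fun z => ⟪w z.1, p z.2 - p z.1⟫) with hgdef
  set G : ℝ := PS.sup' hPSne (fun z => ⟪w z.1, p z.2 - p z.1⟫) with hGdef
  have hmemPS : ∀ {i j : Fin m}, i ≠ j → (i, j) ∈ PS := by
    intro i j hij; simp [hPS, hij]
  have hgle : ∀ i j : Fin m, i ≠ j → g ≤ ⟪w i, p j - p i⟫ := by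
    intro i j hij; exact Finset.inf'_le _ (hmemPS hij)
  have hleG : ∀ i j : Fin m, i ≠ j → ⟪w i, p j - p i⟫ ≤ G := by
    intro i j hij; exact Finset.le_sup' (fun z : Fin m × Fin m => ⟪w z.1, p z.2 - p z.1⟫) (hmemPS hij)
  have hg : 0 < g := by
    rw [hgdef, Finset.lt_inf'_iff]
    intro z hz
    exact hγpos z.1 z.2 (by simpa [hPS] using hz)
  have hG : 0 < G := lt_of_lt_of_le hg (le_trans (hgle i0 j0 hij0) (hleG i0 j0 hij0))
  have hgG : g ≤ G := le_trans (hgle i0 j0 hij0) (hleG i0 j0 hij0)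
  -- norm bounds
  have huniv_ne : (Finset.univ : Finset (Fin m)).Nonempty := ⟨i0, Finset.mem_univ _⟩
  set Bw : ℝ := Finset.univ.sup' huniv_ne (fun i => ‖w i‖) with hBwdef
  set Bp : ℝ := Finset.univ.sup' huniv_ne (fun i => ‖p i‖) with hBpdef
  have hBw0 : 0 ≤ Bw := by
    rw [hBwdef]
    exact le_trans (norm_nonneg (w i0)) (Finset.le_sup' (fun i => ‖w i‖) (Finset.mem_univ i0))
  have hBp0 : 0 ≤ Bp := by
    rw [hBpdef]
    exact le_trans (norm_nonneg (p i0)) (Finset.le_sup' (fun i => ‖p i‖) (Finset.mem_univ i0))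
  set B : ℝ := 1 + Bw + 2*Bp with hBdef
  have hB1 : 1 ≤ B := by rw [hBdef]; linarith
  have hB0 : 0 < B := by linarith
  have hBw : ∀ i, ‖w i‖ ≤ B := by
    intro i
    have h1 := Finset.le_sup' (fun i => ‖w i‖) (Finset.mem_univ i)
    rw [← hBwdef] at h1
    rw [hBdef]; linarith
  have hBp : ∀ l i : Fin m, ‖p l - p i‖ ≤ B := by
    intro l i
    have h1 := Finset.le_sup' (fun i => ‖p i‖) (Finset.mem_univ l)
    have h2 := Finset.le_sup' (fun i => ‖p i‖) (Finset.mem_univ i)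
    rw [← hBpdef] at h1 h2
    have h3 := norm_sub_le (p l) (p i)
    rw [hBdef]; linarith
  -- Q and T
  set Q : ℝ := 4*G/g + 4 with hQdef
  have hQ4 : 4 ≤ Q := by
    rw [hQdef]
    have : 0 ≤ 4*G/g := by positivity
    linarith
  have hQ1 : (1:ℝ) < Q := by linarith
  have hQ0 : (0:ℝ) < Q := by linarith
  have hQg : 4*G ≤ Q*g := by
    rw [hQdef]
    have : 4*G/g*g = 4*G := div_mul_cancel₀ _ (ne_of_gt hg)
    nlinarith
  set T : ℝ := 2/((1+Q)*g) with hTdef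
  have hT : 0 < T := by rw [hTdef]; positivity
  have hTQg : T*((1+Q)*g) = 2 := by
    rw [hTdef]; field_simp
  -- P0
  set TS : Finset (Fin m × Fin m × Fin m) :=
    Finset.univ.filter (fun z : Fin m × Fin m × Fin m => z.2.1 ≠ z.1 ∧ z.2.1 ≠ z.2.2) with hTS
  have hTSne : TS.Nonempty := ⟨(j0, i0, j0), by
    rw [hTS]
    exact Finset.mem_filter.mpr ⟨Finset.mem_univ _, hij0, hij0⟩⟩
  set P0 : ℝ := TS.inf' hTSne (fun z => ⟪p z.1 - p z.2.1, p z.2.2 - p z.2.1⟫) with hP0def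
  have hP0 : 0 < P0 := by
    rw [hP0def, Finset.lt_inf'_iff]
    rintro ⟨l, i, j⟩ hz
    have hz' : i ≠ l ∧ i ≠ j := by simpa [hTS] using hz
    rcases eq_or_ne l j with rfl | hlj
    · have hne : p l - p i ≠ 0 := hpne (Ne.symm hz'.1)
      rw [real_inner_self_eq_norm_sq]
      have : ‖p l - p i‖ ≠ 0 := norm_ne_zero_iff.mpr hne
      positivity
    · exact hacute l i j (Ne.symm hz'.1) hz'.2 hlj
  have hP0le : ∀ l i j : Fin m, i ≠ l → i ≠ j → P0 ≤ ⟪p l - p i, p j - p i⟫ := by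
    intro l i j h1 h2
    have hmem : ((l, i, j) : Fin m × Fin m × Fin m) ∈ TS := by
      rw [hTS]
      exact Finset.mem_filter.mpr ⟨Finset.mem_univ _, h1, h2⟩
    exact Finset.inf'_le (fun z : Fin m × Fin m × Fin m => ⟪p z.1 - p z.2.1, p z.2.2 - p z.2.1⟫) hmem
  clear_value T Q g G P0 B Bp Bw w
  -- the small parameter δ
  set QN : ℝ := Q^N with hQNdef
  have hQN1 : 1 ≤ QN := by rw [hQNdef]; exact one_le_pow₀ (le_of_lt hQ1)
  have hQN0 : 0 < QN := by linarith
  set δ : ℝ := min (1/(1+16*T^2*B^2*QN)) (P0/(1+4*T*B^2+4*T^2*B^2)) with hδdef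
  have hδ : 0 < δ := by
    rw [hδdef]
    apply lt_min
    · positivity
    · exact div_pos hP0 (by positivity)
  have hδ1 : δ ≤ 1 := by
    have h1 : δ ≤ 1/(1+16*T^2*B^2*QN) := by rw [hδdef]; exact min_le_left _ _
    have h2 : 1/(1+16*T^2*B^2*QN) ≤ 1 := by
      rw [div_le_one (by positivity)]
      have : 0 ≤ 16*T^2*B^2*QN := by positivity
      linarith
    linarith
  have hδA1 : 16*T^2*B^2*QN*δ ≤ 1 := by
    have h1 : δ ≤ 1/(1+16*T^2*B^2*QN) := by rw [hδdef]; exact min_le_left _ _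
    rw [le_div_iff₀ (by positivity)] at h1
    nlinarith [hδ]
  have hδA2 : δ*(1+4*T*B^2+4*T^2*B^2) ≤ P0 := by
    have h1 : δ ≤ P0/(1+4*T*B^2+4*T^2*B^2) := by rw [hδdef]; exact min_le_right _ _
    rw [le_div_iff₀ (by positivity)] at h1
    linarith
  -- the scales
  have hQNdef2 : QN = Q^N := hQNdef
  clear_value δ QN
  clear hδdef hQNdef
  set c : Fin N → ℝ := fun k => δ / Q^((k:ℕ)+1) with hcdef
  have hcpos : ∀ k, 0 < c k := by
    intro k
    exact div_pos hδ (pow_pos hQ0 _)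
  have hcδ : ∀ k, c k ≤ δ := by
    intro k
    exact div_le_self (le_of_lt hδ) (one_le_pow₀ (le_of_lt hQ1))
  have hclow : ∀ k : Fin N, δ ≤ c k * QN := by
    intro k
    rw [hQNdef2]
    exact dn_geom_low Q δ hQ1 hδ k.isLt
  have hcQ : ∀ s k : Fin N, (s:ℕ) < (k:ℕ) → Q * c k ≤ c s := by
    intro s k hsk
    exact dn_geom_le Q δ hQ1 hδ hsk
  have hcmono : ∀ s k : Fin N, (s:ℕ) < (k:ℕ) → c k < c s := by
    intro s k hsk
    exact dn_geom_lt Q δ hQ1 hδ hsk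
  have hcne : ∀ s k : Fin N, s ≠ k → c s ≠ c k := by
    intro s k hsk
    rcases lt_or_gt_of_ne (fun h => hsk (Fin.ext h) : (s:ℕ) ≠ (k:ℕ)) with h | h
    · exact ne_of_gt (hcmono s k h)
    · exact ne_of_lt (hcmono k s h)
  -- the points
  clear_value c
  clear hcdef
  set q : Fin m → Fin N → Euc d := fun i k => p i + (T*(c k)^2) • w i with hqdef
  set v : Fin m → Fin N → EuclideanSpace ℝ (Fin d ⊕ Fin m) :=
    fun i k => emb d m (q i k) + (c k) • ee d m i with hvdef
  clear_value q v
  refine ⟨v, ?_, ?_⟩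
  · -- distinctness
    intro i k j r hv
    have heval : ∀ t : Fin m, (c k) * (if t = i then 1 else 0) = (c r) * (if t = j then 1 else 0) := by
      intro t
      have h1 := congrArg (fun z => z (Sum.inr t)) hv
      simp only [hvdef] at h1
      rw [pt_apply_inr, pt_apply_inr] at h1
      exact h1
    have hij : i = j := by
      by_contra hij
      have := heval i
      rw [if_pos rfl, if_neg hij, mul_one, mul_zero] at this
      exact ne_of_gt (hcpos k) this
    refine ⟨hij, ?_⟩
    subst hij
    have := heval i
    rw [if_pos rfl, mul_one, mul_one] at this
    by_contra hkr
    exact hcne k r hkr this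
  · -- the inner product positivity
    intro i j k r l s hij hls
    have hkey : ⟪v l s - v i k, v j r - v i k⟫
        = ⟪q l s - q i k, q j r - q i k⟫
          + ((c s)*(c r)*(if l = j then 1 else 0)
             - (c s)*(c k)*(if l = i then 1 else 0)
             - (c k)*(c r)*(if i = j then 1 else 0)
             + (c k)*(c k)) := by
      simp only [hvdef]
      rw [inner_sub_left, inner_sub_right, inner_sub_right]
      rw [inner_sub_left, inner_sub_right, inner_sub_right]
      rw [inner_pt_pt, inner_pt_pt, inner_pt_pt, inner_pt_pt]
      simp only [if_pos rfl, if_true, eq_self_iff_true]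
      ring
    rw [hkey]
    by_cases hli : l = i
    · -- hard case: x in the same group as u
      subst hli
      have hsk : s ≠ k := hls rfl
      simp only [if_neg hij, if_pos rfl, if_true, eq_self_iff_true]
      have hq1 : q l s - q l k = (T*(c s)^2 - T*(c k)^2) • w l := by
        simp only [hqdef]; module
      have hq2 : q j r - q l k = (p j - p l) + ((T*(c r)^2) • w j - (T*(c k)^2) • w l) := by
        simp only [hqdef]; module
      have hIP : ⟪q l s - q l k, q j r - q l k⟫
          = (T*(c s)^2 - T*(c k)^2) * (⟪w l, p j - p l⟫
              + (T*(c r)^2 * ⟪w l, w j⟫ - T*(c k)^2 * ⟪w l, w l⟫)) := by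
        rw [hq1, hq2]
        simp only [inner_sub_right, inner_add_right, real_inner_smul_left,
          real_inner_smul_right]
        ring
      rw [hIP]
      have hγl : g ≤ ⟪w l, p j - p l⟫ := hgle l j hij
      have hγu : ⟪w l, p j - p l⟫ ≤ G := hleG l j hij
      have hWij : |⟪w l, w j⟫| ≤ B^2 := by
        refine le_trans (abs_real_inner_le_norm _ _) ?_
        have := mul_le_mul (hBw l) (hBw j) (norm_nonneg _) (by linarith : (0:ℝ) ≤ B)
        nlinarith [this]
      have hWii1 : ⟪w l, w l⟫ ≤ B^2 := by
        rw [real_inner_self_eq_norm_sq]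
        have h0 : ‖w l‖ ≤ B := hBw l
        nlinarith [norm_nonneg (w l)]
      have hWii0 : (0:ℝ) ≤ ⟪w l, w l⟫ := real_inner_self_nonneg
      obtain ⟨hR1, hR2⟩ := dn_Rbounds T (B^2) (c r) (c k) δ (⟪w l, w j⟫) (⟪w l, w l⟫)
        hT.le hWij hWii0 hWii1 (hcpos r).le (hcpos k).le (hcδ r) (hcδ k)
      have hsmall : 16*(T^2*(B^2)*δ^3) ≤ c k :=
        dn_small T (B^2) δ QN (c k) hδA1 hδ hδ1 hQN0 (hclow k)
      obtain ⟨hTRl, hTRu⟩ := dn_TRbounds T (B^2) δ _ (c s) (c k) hT hδ (by positivity)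
        hR1 hR2 hsmall (hcpos s) (hcδ s) (hcpos k) (hcδ k)
      have hor : Q*(c k) ≤ c s ∨ Q*(c s) ≤ c k := by
        rcases lt_or_gt_of_ne (fun h => hsk (Fin.ext h) : (s:ℕ) ≠ (k:ℕ)) with hlt | hgt
        · exact Or.inl (hcQ s k hlt)
        · exact Or.inr (hcQ k s hgt)
      have hmain := dn_hard T Q g G (⟪w l, p j - p l⟫)
        (T*(c r)^2 * ⟪w l, w j⟫ - T*(c k)^2 * ⟪w l, w l⟫) (c s) (c k)
        hT hg hTQg hQg hQ0 hγl hγu (hcpos s) (hcpos k) hTRl hTRu hor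
      nlinarith [hmain]
    · -- easy case
      simp only [if_neg hli, if_neg hij]
      have hq3 : q l s - q i k = (p l - p i) + ((T*(c s)^2) • w l - (T*(c k)^2) • w i) := by
        simp only [hqdef]; module
      have hq2 : q j r - q i k = (p j - p i) + ((T*(c r)^2) • w j - (T*(c k)^2) • w i) := by
        simp only [hqdef]; module
      have hIP : ⟪q l s - q i k, q j r - q i k⟫
          = ⟪p l - p i, p j - p i⟫
            + ⟪p l - p i, (T*(c r)^2) • w j - (T*(c k)^2) • w i⟫
            + ⟪(T*(c s)^2) • w l - (T*(c k)^2) • w i, p j - p i⟫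
            + ⟪(T*(c s)^2) • w l - (T*(c k)^2) • w i,
                (T*(c r)^2) • w j - (T*(c k)^2) • w i⟫ := by
        rw [hq3, hq2, inner_add_left, inner_add_right, inner_add_right]
        ring
      rw [hIP]
      have hnU : ‖(T*(c s)^2) • w l - (T*(c k)^2) • w i‖ ≤ 2*T*B*δ^2 :=
        dn_norm_bound (w l) (w i) T (c s) (c k) δ B hT.le (hcpos s).le (hcpos k).le
          (hcδ s) (hcδ k) (hBw l) (hBw i) (by linarith)
      have hnV : ‖(T*(c r)^2) • w j - (T*(c k)^2) • w i‖ ≤ 2*T*B*δ^2 :=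
        dn_norm_bound (w j) (w i) T (c r) (c k) δ B hT.le (hcpos r).le (hcpos k).le
          (hcδ r) (hcδ k) (hBw j) (hBw i) (by linarith)
      have h1 : |⟪p l - p i, (T*(c r)^2) • w j - (T*(c k)^2) • w i⟫| ≤ B*(2*T*B*δ^2) := by
        refine le_trans (abs_real_inner_le_norm _ _) ?_
        exact mul_le_mul (hBp l i) hnV (norm_nonneg _) (by linarith)
      have h2 : |⟪(T*(c s)^2) • w l - (T*(c k)^2) • w i, p j - p i⟫| ≤ B*(2*T*B*δ^2) := by
        refine le_trans (abs_real_inner_le_norm _ _) ?_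
        have := mul_le_mul hnU (hBp j i) (norm_nonneg _) (by positivity)
        linarith [this]
      have h3 : |⟪(T*(c s)^2) • w l - (T*(c k)^2) • w i,
          (T*(c r)^2) • w j - (T*(c k)^2) • w i⟫| ≤ (2*T*B*δ^2)^2 := by
        refine le_trans (abs_real_inner_le_norm _ _) ?_
        have := mul_le_mul hnU hnV (norm_nonneg _) (by positivity)
        nlinarith [this]
      have hbase : P0 ≤ ⟪p l - p i, p j - p i⟫ := hP0le l i j (Ne.symm hli) hij
      have hadd : (0:ℝ) ≤ (c s)*(c r)*(if l = j then 1 else 0) + (c k)*(c k) := by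
        rcases eq_or_ne l j with rfl | hlj
        · rw [if_pos rfl]
          nlinarith [mul_pos (hcpos s) (hcpos r), mul_pos (hcpos k) (hcpos k)]
        · rw [if_neg hlj]
          nlinarith [mul_pos (hcpos k) (hcpos k)]
      have hmain := dn_easy P0 B T δ (⟪p l - p i, p j - p i⟫)
        (⟪p l - p i, (T*(c r)^2) • w j - (T*(c k)^2) • w i⟫)
        (⟪(T*(c s)^2) • w l - (T*(c k)^2) • w i, p j - p i⟫)
        (⟪(T*(c s)^2) • w l - (T*(c k)^2) • w i,
            (T*(c r)^2) • w j - (T*(c k)^2) • w i⟫)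
        ((c s)*(c r)*(if l = j then 1 else 0) + (c k)*(c k))
        hbase hB1 hT hδ hδ1 hδA2 h1 h2 h3 hadd
      nlinarith [hmain]

lemma dn_package (d m : ℕ) (N : ℕ)
    (v : Fin m → Fin N → EuclideanSpace ℝ (Fin d ⊕ Fin m))
    (hvinj : ∀ i k j r, v i k = v j r → i = j ∧ k = r)
    (hcore : ∀ i j k r l s, i ≠ j → (l = i → s ≠ k) →
        0 < ⟪v l s - v i k, v j r - v i k⟫) :
    ContainsStrictDNMultipartite (d + m) m N := by
  classical
  let f : EuclideanSpace ℝ (Fin d ⊕ Fin m) ≃ₗᵢ[ℝ] Euc (d+m) :=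
    LinearIsometryEquiv.piLpCongrLeft 2 ℝ ℝ (finSumFinEquiv : Fin d ⊕ Fin m ≃ Fin (d+m))
  set y : Fin m → Fin N → Euc (d+m) := fun i k => f (v i k) with hy
  have hyinj : ∀ i k j r, y i k = y j r → i = j ∧ k = r := by
    intro i k j r h
    exact hvinj i k j r (f.injective h)
  have hyinner : ∀ (i j l : Fin m) (k r s : Fin N),
      ⟪y l s - y i k, y j r - y i k⟫ = ⟪v l s - v i k, v j r - v i k⟫ := by
    intro i j l k r s
    rw [hy]
    simp only
    rw [← map_sub, ← map_sub, LinearIsometryEquiv.inner_map_map]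
  refine ⟨Finset.image (fun z : Fin m × Fin N => y z.1 z.2) Finset.univ,
          fun i => Finset.image (y i) Finset.univ, ?_, ?_, ?_, ?_⟩
  · intro i x hx
    obtain ⟨k, _, rfl⟩ := Finset.mem_image.mp hx
    exact Finset.mem_image.mpr ⟨(i, k), Finset.mem_univ _, rfl⟩
  · intro i
    rw [Finset.card_image_of_injective _ (fun k r h => (hyinj i k i r h).2),
      Finset.card_univ, Fintype.card_fin]
  · intro i j hij
    rw [Finset.disjoint_left]
    intro x hx1 hx2
    obtain ⟨k, _, rfl⟩ := Finset.mem_image.mp hx1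
    obtain ⟨r, _, hEq⟩ := Finset.mem_image.mp hx2
    exact hij ((hyinj j r i k hEq).1).symm
  · intro i j hij u hu w hw
    obtain ⟨k, _, rfl⟩ := Finset.mem_image.mp hu
    obtain ⟨r, _, rfl⟩ := Finset.mem_image.mp hw
    refine ⟨fun h => hij (hyinj i k j r h).1, ?_, ?_, ?_⟩
    · exact Finset.mem_image.mpr ⟨(i, k), Finset.mem_univ _, rfl⟩
    · exact Finset.mem_image.mpr ⟨(j, r), Finset.mem_univ _, rfl⟩
    · intro x hx hxu hxw
      obtain ⟨⟨l, s⟩, _, rfl⟩ := Finset.mem_image.mp hx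
      constructor
      · rw [hyinner]
        refine hcore i j k r l s hij ?_
        intro hl hs
        exact hxu (by rw [hl, hs])
      · rw [hyinner]
        refine hcore j i r k l s hij.symm ?_
        intro hl hs
        exact hxw (by rw [hl, hs])

theorem stmt2 (d m : ℕ) (hm : 2 ≤ m) (p : Fin m → Euc d)
    (hinj : Function.Injective p)
    (hacute : ∀ i j l : Fin m, i ≠ j → j ≠ l → i ≠ l →
      0 < ⟪p i - p j, p l - p j⟫) :
    ∀ N : ℕ, ContainsStrictDNMultipartite (d + m) m N := by
  intro N
  obtain ⟨v, hvinj, hcore⟩ := exists_good_family d m hm p hinj hacute N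
  exact dn_package d m N v hvinj hcore
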